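/- Let 1 < ρ < 2, μ > 0, λ > 0, T > 0, and let (α_k)_{k ≥ 1} be an i.i.d. sequence of random variables on a probability space (Ω̄, F̄, P̄), each with the Gamma distribution of shape μ and rate λ. Then, P̄-almost surely, sup_{t ∈ [0,T]} | (1/n) ∑_{k=1}^n E_ρ(−α_k t^ρ) − G_ρ(−t^ρ/λ) | → 0 as n → ∞. -/

import Mathlib

open MeasureTheory ProbabilityTheory
open scoped ENNReal NNReal

/-- The Mittag-Leffler function `E_ρ(x) = ∑ x^k / Γ(ρ k + 1)`. -/
noncomputable def mittagLeffler (ρ x : ℝ) : ℝ :=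
  ∑' k : ℕ, x ^ k / Real.Gamma (ρ * k + 1)

/-- The generalized Mittag-Leffler function
`G_ρ(x) = ∑ (μ)_k / Γ(ρk + 1) · x^k` with `(μ)_k = Γ(μ + k)/Γ(μ)`. -/
noncomputable def genML (ρ μ x : ℝ) : ℝ :=
  ∑' k : ℕ, (Real.Gamma (μ + k) / Real.Gamma μ) / Real.Gamma (ρ * k + 1) * x ^ k

/-- The Gamma distribution with shape `μ` and rate `λ`: the measure on `ℝ` with density
`f(x) = λ e^{−λx} (λx)^{μ−1} / Γ(μ)` on `(0, ∞)`. -/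
noncomputable def gammaLaw (μ lam : ℝ) : Measure ℝ :=
  (volume.restrict (Set.Ioi (0 : ℝ))).withDensity
    (fun x => ENNReal.ofReal (lam * Real.exp (-(lam * x)) * (lam * x) ^ (μ - 1)
      / Real.Gamma μ))

open Filter Finset Real in
private lemma ULLN.nat_fact_bound {M k n p : ℕ} (hn : M + 2 ≤ n) (hp : p = n - (M + 1)) :
    Nat.factorial (M + k + 1) * (k + 1) ^ p ≤ Nat.factorial (k + n) := by
  have h1 : Nat.factorial (M + k + 1) * (M + k + 1 + 1) ^ p ≤ Nat.factorial (M + k + 1 + p) :=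
    Nat.factorial_mul_pow_le_factorial
  have h2 : (k + 1) ^ p ≤ (M + k + 1 + 1) ^ p := Nat.pow_le_pow_left (by omega) p
  have h3 : M + k + 1 + p = k + n := by omega
  calc Nat.factorial (M + k + 1) * (k + 1) ^ p
        ≤ Nat.factorial (M + k + 1) * (M + k + 1 + 1) ^ p := Nat.mul_le_mul_left _ h2
    _ ≤ Nat.factorial (M + k + 1 + p) := h1
    _ = Nat.factorial (k + n) := by rw [h3]

open Filter Finset Real in
private lemma ULLN.summable_gamma_ratio {ρ μ : ℝ} (hρ : 1 < ρ) (hμ : 0 < μ) {x : ℝ}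
    (hx : 0 ≤ x) :
    Summable (fun k : ℕ => Real.Gamma (μ + k) / Real.Gamma (ρ * k + 1) * x ^ k) := by
  obtain ⟨δ, hδdef⟩ : ∃ δ : ℝ, δ = ρ - 1 := ⟨_, rfl⟩
  have hδ : 0 < δ := by rw [hδdef]; linarith
  obtain ⟨M, hMdef⟩ : ∃ M : ℕ, M = ⌈μ⌉₊ := ⟨_, rfl⟩
  have hμM : μ ≤ M := by rw [hMdef]; exact Nat.le_ceil μ
  have hnonneg : ∀ k : ℕ, 0 ≤ Real.Gamma (μ + k) / Real.Gamma (ρ * k + 1) * x ^ k := by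
    intro k
    have h1 : (0:ℝ) ≤ μ + k := by positivity
    have h2 : (0:ℝ) ≤ ρ * k + 1 := by
      have : (0:ℝ) ≤ ρ * k := mul_nonneg (by linarith) (Nat.cast_nonneg k)
      linarith
    exact mul_nonneg (div_nonneg (Real.Gamma_nonneg_of_nonneg h1)
      (Real.Gamma_nonneg_of_nonneg h2)) (pow_nonneg hx k)
  have hev : ∀ᶠ (k : ℕ) in atTop,
      Real.Gamma (μ + k) / Real.Gamma (ρ * k + 1) * x ^ k ≤ (1/2 : ℝ) ^ k := by
    have e1 : ∀ᶠ (k : ℕ) in atTop, 2 ≤ k := eventually_ge_atTop 2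
    have e2 : ∀ᶠ (k : ℕ) in atTop, (2 * ((M : ℝ) + 2) + 2 : ℝ) ≤ δ * k := by
      have h : Tendsto (fun k : ℕ => δ * k) atTop atTop :=
        (tendsto_natCast_atTop_atTop (R := ℝ)).const_mul_atTop hδ
      exact h.eventually_ge_atTop _
    have e3 : ∀ᶠ (k : ℕ) in atTop, (2 * (x + 1)) ^ ((2:ℝ)/δ) ≤ (k : ℝ) + 1 := by
      have h : Tendsto (fun k : ℕ => (k : ℝ) + 1) atTop atTop :=
        tendsto_atTop_add_const_right _ 1 (tendsto_natCast_atTop_atTop (R := ℝ))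
      exact h.eventually_ge_atTop _
    filter_upwards [e1, e2, e3] with k hk2 hkδ hkx
    have hk2' : (2:ℝ) ≤ (k:ℝ) := by exact_mod_cast hk2
    obtain ⟨n, hn⟩ : ∃ n : ℕ, n = ⌊δ * (k:ℝ)⌋₊ := ⟨_, rfl⟩
    have hδk0 : (0:ℝ) ≤ δ * k := by positivity
    have hfl : (n : ℝ) ≤ δ * k := by rw [hn]; exact Nat.floor_le hδk0
    have hfl2 : δ * (k:ℝ) < n + 1 := by
      rw [hn]; exact Nat.lt_floor_add_one _
    have hnM : M + 2 ≤ n := by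
      have h1 : ((M:ℝ) + 2) < (n:ℝ) + 1 := by linarith
      have h2 : (M + 2 : ℕ) < n + 1 := by exact_mod_cast h1
      omega
    obtain ⟨p, hp⟩ : ∃ p : ℕ, p = n - (M + 1) := ⟨_, rfl⟩
    have hM1n : M + 1 ≤ n := by omega
    have hpc : (p : ℝ) = (n : ℝ) - ((M:ℝ) + 1) := by
      rw [hp]
      push_cast [Nat.cast_sub hM1n]
      ring
    have hpk : δ * k / 2 ≤ (p : ℝ) := by rw [hpc]; linarith
    -- Gamma bounds
    have hρk1 : (0:ℝ) < ρ * k + 1 := by nlinarith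
    have hΓpos : 0 < Real.Gamma (ρ * k + 1) := Real.Gamma_pos_of_pos hρk1
    have hup : Real.Gamma (μ + k) ≤ (Nat.factorial (M + k + 1) : ℝ) := by
      have h1 : Real.Gamma (μ + k) ≤ Real.Gamma (((M + k + 1 : ℕ) : ℝ) + 1) := by
        apply Real.Gamma_strictMonoOn_Ici.monotoneOn
        · simp only [Set.mem_Ici]; linarith
        · simp only [Set.mem_Ici]; push_cast; linarith
        · push_cast; linarith
      rwa [Real.Gamma_nat_eq_factorial] at h1
    have hlow : (Nat.factorial (k + n) : ℝ) ≤ Real.Gamma (ρ * k + 1) := by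
      have h1 : Real.Gamma (((k + n : ℕ) : ℝ) + 1) ≤ Real.Gamma (ρ * k + 1) := by
        apply Real.Gamma_strictMonoOn_Ici.monotoneOn
        · simp only [Set.mem_Ici]; push_cast; linarith [Nat.cast_nonneg (α := ℝ) n]
        · simp only [Set.mem_Ici]; nlinarith
        · push_cast
          have : ρ * k = k + δ * k := by rw [hδdef]; ring
          linarith
      rwa [Real.Gamma_nat_eq_factorial] at h1
    have hfact : Nat.factorial (M + k + 1) * (k + 1) ^ p ≤ Nat.factorial (k + n) := ULLN.nat_fact_bound hnM hp
    have hkp_pos : (0:ℝ) < ((k:ℝ) + 1) ^ p := by positivity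
    have main1 : Real.Gamma (μ + k) / Real.Gamma (ρ * k + 1) * x ^ k
        ≤ x ^ k / ((k:ℝ) + 1) ^ p := by
      have hdd : Real.Gamma (μ + k) / Real.Gamma (ρ * k + 1) ≤ 1 / ((k:ℝ) + 1) ^ p := by
        rw [div_le_div_iff₀ hΓpos hkp_pos]
        calc Real.Gamma (μ + k) * ((k:ℝ) + 1) ^ p
            ≤ (Nat.factorial (M + k + 1) : ℝ) * ((k:ℝ) + 1) ^ p :=
              mul_le_mul_of_nonneg_right hup (by positivity)
          _ ≤ (Nat.factorial (k + n) : ℝ) := by exact_mod_cast hfact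
          _ ≤ 1 * Real.Gamma (ρ * k + 1) := by rw [one_mul]; exact hlow
      calc Real.Gamma (μ + k) / Real.Gamma (ρ * k + 1) * x ^ k
          ≤ 1 / ((k:ℝ) + 1) ^ p * x ^ k :=
            mul_le_mul_of_nonneg_right hdd (pow_nonneg hx k)
        _ = x ^ k / ((k:ℝ) + 1) ^ p := by ring
    have h2x : (0:ℝ) < 2 * (x + 1) := by linarith
    have hb1 : (1:ℝ) ≤ (k:ℝ) + 1 := by linarith
    have hpow : (2 * (x + 1)) ^ k ≤ ((k:ℝ) + 1) ^ p := by
      have hstep : 2 * (x + 1) ≤ ((k:ℝ) + 1) ^ ((δ:ℝ)/2) := by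
        have hid : 2 * (x + 1) = ((2 * (x + 1)) ^ ((2:ℝ)/δ)) ^ ((δ:ℝ)/2) := by
          rw [← Real.rpow_mul h2x.le]
          have : (2:ℝ)/δ * (δ/2) = 1 := by field_simp
          rw [this, Real.rpow_one]
        rw [hid]
        exact Real.rpow_le_rpow (Real.rpow_nonneg h2x.le _) hkx (by positivity)
      calc (2 * (x + 1)) ^ k ≤ (((k:ℝ) + 1) ^ ((δ:ℝ)/2)) ^ k :=
            pow_le_pow_left₀ h2x.le hstep k
        _ = ((k:ℝ) + 1) ^ ((δ/2) * k) := by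
            rw [← Real.rpow_natCast (((k:ℝ) + 1) ^ ((δ:ℝ)/2)) k, ← Real.rpow_mul (by positivity)]
        _ ≤ ((k:ℝ) + 1) ^ ((p:ℕ) : ℝ) := by
            apply Real.rpow_le_rpow_of_exponent_le hb1
            have : δ / 2 * k = δ * k / 2 := by ring
            rw [this]; exact hpk
        _ = ((k:ℝ) + 1) ^ p := Real.rpow_natCast _ p
    have main2 : x ^ k / ((k:ℝ) + 1) ^ p ≤ (1/2 : ℝ) ^ k := by
      have hne : (0:ℝ) < (2 * (x + 1)) ^ k := by positivity
      have step1 : x ^ k / ((k:ℝ) + 1) ^ p ≤ x ^ k / (2 * (x + 1)) ^ k := by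
        gcongr
      have step2 : x ^ k / (2 * (x + 1)) ^ k ≤ (x + 1) ^ k / (2 * (x + 1)) ^ k := by
        gcongr <;> linarith
      have step3 : (x + 1) ^ k / (2 * (x + 1)) ^ k = (1/2 : ℝ) ^ k := by
        have hx1 : ((x:ℝ) + 1) ^ k ≠ 0 := by positivity
        rw [mul_pow, div_pow, one_pow, mul_comm ((2:ℝ) ^ k), div_mul_eq_div_div,
          div_self hx1]
      linarith
    linarith
  apply summable_of_isBigO_nat (summable_geometric_of_lt_one (by norm_num) (by norm_num :
    (1/2 : ℝ) < 1))
  rw [Asymptotics.isBigO_iff]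
  refine ⟨1, ?_⟩
  filter_upwards [hev] with k hk
  rw [one_mul, Real.norm_eq_abs, Real.norm_eq_abs, abs_of_nonneg (hnonneg k),
    abs_of_nonneg (by positivity : (0:ℝ) ≤ (1/2:ℝ) ^ k)]
  exact hk

open Filter Finset Real in
private lemma ULLN.summable_ML {ρ : ℝ} (hρ : 1 < ρ) (y : ℝ) :
    Summable (fun k : ℕ => y ^ k / Real.Gamma (ρ * k + 1)) := by
  have h := ULLN.summable_gamma_ratio (μ := 1) hρ one_pos (abs_nonneg y)
  apply Summable.of_norm_bounded h
  intro k
  have hρk1 : (0:ℝ) < ρ * k + 1 := by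
    have : (0:ℝ) ≤ ρ * k := mul_nonneg (by linarith) (Nat.cast_nonneg k)
    linarith
  have hΓpos : 0 < Real.Gamma (ρ * k + 1) := Real.Gamma_pos_of_pos hρk1
  have h1 : Real.Gamma (1 + (k:ℝ)) = (Nat.factorial k : ℝ) := by
    rw [add_comm, Real.Gamma_nat_eq_factorial]
  have h2 : (1:ℝ) ≤ Real.Gamma (1 + (k:ℝ)) := by
    rw [h1]; exact_mod_cast Nat.one_le_iff_ne_zero.mpr (Nat.factorial_ne_zero k)
  have h3 : ‖y ^ k / Real.Gamma (ρ * k + 1)‖ = |y| ^ k / Real.Gamma (ρ * k + 1) := by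
    rw [Real.norm_eq_abs, abs_div, abs_pow, abs_of_pos hΓpos]
  rw [h3]
  calc |y| ^ k / Real.Gamma (ρ * k + 1)
      = 1 * (|y| ^ k / Real.Gamma (ρ * k + 1)) := (one_mul _).symm
    _ ≤ Real.Gamma (1 + (k:ℝ)) * (|y| ^ k / Real.Gamma (ρ * k + 1)) :=
        mul_le_mul_of_nonneg_right h2 (by positivity)
    _ = Real.Gamma (1 + (k:ℝ)) / Real.Gamma (ρ * k + 1) * |y| ^ k := by ring

open Filter Finset Real in
private lemma ULLN.gammaLaw_eq (μ lam : ℝ) :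
    gammaLaw μ lam = (volume.restrict (Set.Ioi (0 : ℝ))).withDensity
      (fun x => ((Real.toNNReal (lam * Real.exp (-(lam * x)) * (lam * x) ^ (μ - 1)
        / Real.Gamma μ)) : ℝ≥0∞)) := rfl

open Filter Finset Real in
private lemma ULLN.dens_meas (μ lam : ℝ) :
    Measurable (fun x : ℝ => Real.toNNReal (lam * Real.exp (-(lam * x)) * (lam * x) ^ (μ - 1)
      / Real.Gamma μ)) := by
  apply Measurable.real_toNNReal
  fun_prop

open Filter Finset Real in
private lemma ULLN.dens_nonneg {μ lam : ℝ} (hμ : 0 < μ) (hlam : 0 < lam) {x : ℝ}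
    (hx : x ∈ Set.Ioi (0:ℝ)) :
    0 ≤ lam * Real.exp (-(lam * x)) * (lam * x) ^ (μ - 1) / Real.Gamma μ := by
  have hx0 : (0:ℝ) < x := hx
  apply div_nonneg
  · exact mul_nonneg (mul_nonneg hlam.le (Real.exp_pos _).le)
      (Real.rpow_nonneg (mul_nonneg hlam.le hx0.le) _)
  · exact Real.Gamma_nonneg_of_nonneg hμ.le

open Filter Finset Real in
private lemma ULLN.integral_gammaLaw {μ lam : ℝ} (hμ : 0 < μ) (hlam : 0 < lam) (g : ℝ → ℝ) :
    ∫ x, g x ∂(gammaLaw μ lam)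
      = ∫ x in Set.Ioi (0:ℝ),
          (lam * Real.exp (-(lam * x)) * (lam * x) ^ (μ - 1) / Real.Gamma μ) * g x := by
  rw [ULLN.gammaLaw_eq, integral_withDensity_eq_integral_smul (ULLN.dens_meas μ lam)]
  refine setIntegral_congr_fun measurableSet_Ioi (fun x hx => ?_)
  simp only [NNReal.smul_def, smul_eq_mul]
  rw [Real.coe_toNNReal _ (ULLN.dens_nonneg hμ hlam hx)]

open Filter Finset Real in
private lemma ULLN.integrable_gammaLaw_iff {μ lam : ℝ} (hμ : 0 < μ) (hlam : 0 < lam)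
    {g : ℝ → ℝ} :
    Integrable g (gammaLaw μ lam) ↔
      IntegrableOn (fun x =>
        (lam * Real.exp (-(lam * x)) * (lam * x) ^ (μ - 1) / Real.Gamma μ) * g x)
        (Set.Ioi (0:ℝ)) := by
  rw [ULLN.gammaLaw_eq, integrable_withDensity_iff_integrable_smul (ULLN.dens_meas μ lam)]
  have hae : (fun x => ((Real.toNNReal (lam * Real.exp (-(lam * x)) * (lam * x) ^ (μ - 1)
        / Real.Gamma μ) : ℝ)) • g x)
      =ᵐ[volume.restrict (Set.Ioi (0:ℝ))]
      (fun x => (lam * Real.exp (-(lam * x)) * (lam * x) ^ (μ - 1) / Real.Gamma μ) * g x) := by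
    filter_upwards [ae_restrict_mem measurableSet_Ioi] with x hx
    simp only [smul_eq_mul]
    rw [Real.coe_toNNReal _ (ULLN.dens_nonneg hμ hlam hx)]
  exact ⟨fun h => h.congr hae, fun h => h.congr hae.symm⟩

open Filter Finset Real in
private lemma ULLN.dens_mul_pow_eqOn {μ lam : ℝ} (hμ : 0 < μ) (hlam : 0 < lam) (k : ℕ) :
    Set.EqOn
      (fun x => (lam * Real.exp (-(lam * x)) * (lam * x) ^ (μ - 1) / Real.Gamma μ) * x ^ k)
      (fun x => lam ^ μ / Real.Gamma μ * (x ^ (μ + k - 1) * Real.exp (-(lam * x))))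
      (Set.Ioi (0:ℝ)) := by
  intro x hx
  have hx0 : (0:ℝ) < x := hx
  have hl : lam ^ (1:ℝ) * lam ^ (μ - 1) = lam ^ μ := by
    rw [← Real.rpow_add hlam]
    norm_num
  simp only
  rw [Real.mul_rpow hlam.le hx0.le,
    show μ + (k:ℝ) - 1 = (μ - 1) + (k:ℝ) by ring,
    Real.rpow_add hx0, Real.rpow_natCast, ← hl, Real.rpow_one]
  ring

open Filter Finset Real in
private lemma ULLN.gammaLaw_moment {μ lam : ℝ} (hμ : 0 < μ) (hlam : 0 < lam) (k : ℕ) :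
    ∫ x, x ^ k ∂(gammaLaw μ lam) = Real.Gamma (μ + k) / (Real.Gamma μ * lam ^ k) := by
  rw [ULLN.integral_gammaLaw hμ hlam,
    setIntegral_congr_fun measurableSet_Ioi (ULLN.dens_mul_pow_eqOn hμ hlam k),
    MeasureTheory.integral_const_mul,
    integral_rpow_mul_exp_neg_mul_Ioi (by positivity) hlam]
  have h1 : ((1:ℝ)/lam) ^ (μ + (k:ℝ)) = (lam ^ μ * lam ^ k)⁻¹ := by
    rw [one_div, Real.inv_rpow hlam.le, Real.rpow_add hlam, Real.rpow_natCast]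
  rw [h1]
  have hΓμ : (0:ℝ) < Real.Gamma μ := Real.Gamma_pos_of_pos hμ
  have hlμ : (0:ℝ) < lam ^ μ := Real.rpow_pos_of_pos hlam μ
  have hlk : (0:ℝ) < lam ^ k := pow_pos hlam k
  field_simp

open Filter Finset Real in
private lemma ULLN.gammaLaw_moment_integrable {μ lam : ℝ} (hμ : 0 < μ) (hlam : 0 < lam)
    (k : ℕ) : Integrable (fun x : ℝ => x ^ k) (gammaLaw μ lam) := by
  rw [ULLN.integrable_gammaLaw_iff hμ hlam]
  have base : IntegrableOn (fun x : ℝ => x ^ (μ + k - 1) * Real.exp (-(lam * x)))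
      (Set.Ioi (0:ℝ)) := by
    have h := integrableOn_rpow_mul_exp_neg_mul_rpow (p := 1) (s := μ + k - 1) (b := lam)
      (by push_cast; nlinarith [Nat.cast_nonneg (α := ℝ) k]) one_pos hlam
    refine h.congr_fun (fun x hx => ?_) measurableSet_Ioi
    simp only [Real.rpow_one, neg_mul]
  have h2 : IntegrableOn
      (fun x => lam ^ μ / Real.Gamma μ * (x ^ (μ + k - 1) * Real.exp (-(lam * x))))
      (Set.Ioi (0:ℝ)) := base.const_mul _
  refine h2.congr ?_
  filter_upwards [ae_restrict_mem measurableSet_Ioi] with x hx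
  exact ((ULLN.dens_mul_pow_eqOn hμ hlam k) hx).symm

open Filter Finset Real in
private lemma ULLN.gammaLaw_ae_pos (μ lam : ℝ) :
    ∀ᵐ x ∂(gammaLaw μ lam), x ∈ Set.Ioi (0:ℝ) := by
  rw [ae_iff]
  have h1 : {x : ℝ | ¬ x ∈ Set.Ioi (0:ℝ)} = Set.Iic 0 := by ext x; simp
  rw [h1, gammaLaw, withDensity_apply _ measurableSet_Iic,
    Measure.restrict_restrict measurableSet_Iic]
  have h2 : Set.Iic (0:ℝ) ∩ Set.Ioi 0 = ∅ := by
    ext x; simp only [Set.mem_inter_iff, Set.mem_Iic, Set.mem_Ioi, Set.mem_empty_iff_false,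
      iff_false, not_and, not_lt]
    exact fun h => h
  rw [h2]
  simp

open Filter Finset Real in
private lemma ULLN.slln_comp {Ω : Type*} [MeasurableSpace Ω] (P : Measure Ω)
    [IsProbabilityMeasure P] {μ lam : ℝ} (α : ℕ → Ω → ℝ) (hmeas : ∀ k, Measurable (α k))
    (hindep : iIndepFun α P)
    (hdist : ∀ k, P.map (α k) = gammaLaw μ lam)
    (g : ℝ → ℝ) (hg : Measurable g) (hgi : Integrable g (gammaLaw μ lam)) :
    ∀ᵐ ω ∂P, Tendsto (fun n => (∑ j ∈ Finset.range n, g (α j ω)) / n)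
      atTop (nhds (∫ x, g x ∂(gammaLaw μ lam))) := by
  have h0 : Integrable g (P.map (α 0)) := by rw [hdist 0]; exact hgi
  have hint : Integrable (fun ω => g (α 0 ω)) P :=
    (integrable_map_measure hg.aestronglyMeasurable (hmeas 0).aemeasurable).mp h0
  have hiid : ∀ i, IdentDistrib (fun ω => g (α i ω)) (fun ω => g (α 0 ω)) P P := by
    intro i
    have hbase : IdentDistrib (α i) (α 0) P P :=
      ⟨(hmeas i).aemeasurable, (hmeas 0).aemeasurable, by rw [hdist i, hdist 0]⟩
    exact hbase.comp hg
  have hpair : Pairwise (Function.onFun (IndepFun · · P) (fun i ω => g (α i ω))) :=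
    fun i j hij => (hindep.indepFun hij).comp hg hg
  have hval : ∫ ω, g (α 0 ω) ∂P = ∫ x, g x ∂(gammaLaw μ lam) := by
    rw [← hdist 0, integral_map (hmeas 0).aemeasurable hg.aestronglyMeasurable]
  have h := strong_law_ae_real (fun i ω => g (α i ω)) hint hpair hiid
  rw [hval] at h
  exact h

set_option maxHeartbeats 1000000 in
open Filter Finset Real in
private lemma ULLN.prelude {ρ μ lam T : ℝ}
    (hρ₁ : 1 < ρ) (hμ : 0 < μ) (hlam : 0 < lam) (hT : 0 < T) :
    (∀ k : ℕ, 0 < Real.Gamma (ρ * (k:ℝ) + 1)) ∧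
    Summable (fun k : ℕ => (T ^ ρ) ^ k / Real.Gamma (ρ * (k:ℝ) + 1)
      * (Real.Gamma (μ + (k:ℝ)) / (Real.Gamma μ * lam ^ k))) ∧
    (∀ x : ℝ, Summable (fun k : ℕ => (T ^ ρ) ^ k / Real.Gamma (ρ * (k:ℝ) + 1) * x ^ k)) ∧
    (∀ x : ℝ, mittagLeffler ρ (x * T ^ ρ)
      = ∑' k : ℕ, (T ^ ρ) ^ k / Real.Gamma (ρ * (k:ℝ) + 1) * x ^ k) := by
  have hρ0 : (0:ℝ) < ρ := by linarith
  have hTρ : (0:ℝ) < T ^ ρ := Real.rpow_pos_of_pos hT ρ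
  have hΓρ : ∀ k : ℕ, 0 < Real.Gamma (ρ * (k:ℝ) + 1) := by
    intro k
    apply Real.Gamma_pos_of_pos
    have : (0:ℝ) ≤ ρ * k := mul_nonneg hρ0.le (Nat.cast_nonneg k)
    linarith
  have hΓμ : (0:ℝ) < Real.Gamma μ := Real.Gamma_pos_of_pos hμ
  refine ⟨hΓρ, ?_, ?_, ?_⟩
  · have h := (ULLN.summable_gamma_ratio hρ₁ hμ
      (x := T ^ ρ / lam) (by positivity)).div_const (Real.Gamma μ)
    refine h.congr fun k => ?_
    rw [div_pow]
    have hlk : (lam:ℝ) ^ k ≠ 0 := (pow_pos hlam k).ne'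
    field_simp
  · intro x
    refine (ULLN.summable_ML hρ₁ (x * T ^ ρ)).congr fun k => ?_
    rw [mul_pow]
    ring
  · intro x
    simp only [mittagLeffler]
    refine tsum_congr fun k => ?_
    rw [mul_pow]
    ring

set_option maxHeartbeats 1000000 in
open Filter Finset Real in
private lemma ULLN.F_props {ρ μ lam T : ℝ}
    (hρ₁ : 1 < ρ) (hμ : 0 < μ) (hlam : 0 < lam) (hT : 0 < T) :
    Measurable (fun x : ℝ => mittagLeffler ρ (x * T ^ ρ)) ∧
    Integrable (fun x : ℝ => mittagLeffler ρ (x * T ^ ρ)) (gammaLaw μ lam) ∧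
    ∫ x, mittagLeffler ρ (x * T ^ ρ) ∂(gammaLaw μ lam)
      = ∑' k : ℕ, (T ^ ρ) ^ k / Real.Gamma (ρ * (k:ℝ) + 1)
        * (Real.Gamma (μ + (k:ℝ)) / (Real.Gamma μ * lam ^ k)) := by
  obtain ⟨hΓρ, hsum_cM, hsum_cx, hFeq⟩ := ULLN.prelude hρ₁ hμ hlam hT
  obtain ⟨c, hcdef⟩ : ∃ c : ℕ → ℝ,
      c = fun k : ℕ => (T ^ ρ) ^ k / Real.Gamma (ρ * (k:ℝ) + 1) := ⟨_, rfl⟩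
  obtain ⟨Mo, hModef⟩ : ∃ Mo : ℕ → ℝ,
      Mo = fun k : ℕ => Real.Gamma (μ + (k:ℝ)) / (Real.Gamma μ * lam ^ k) := ⟨_, rfl⟩
  have hsum_cM : Summable (fun k : ℕ => c k * Mo k) := by
    refine hsum_cM.congr fun k => ?_
    simp only [hcdef, hModef]
  have hsum_cx : ∀ x : ℝ, Summable (fun k : ℕ => c k * x ^ k) := by
    intro x
    refine (hsum_cx x).congr fun k => ?_
    simp only [hcdef]
  have hFeq : ∀ x : ℝ, mittagLeffler ρ (x * T ^ ρ) = ∑' k, c k * x ^ k := by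
    intro x
    rw [hFeq x]
    exact tsum_congr fun k => by simp only [hcdef]
  have hTρ : (0:ℝ) < T ^ ρ := Real.rpow_pos_of_pos hT ρ
  have hc0 : ∀ k, 0 ≤ c k := by
    intro k; rw [hcdef]
    exact div_nonneg (by positivity) (hΓρ k).le
  have hMo0 : ∀ k, 0 ≤ Mo k := by
    intro k; rw [hModef]
    have h1 : (0:ℝ) ≤ μ + k := by positivity
    exact div_nonneg (Real.Gamma_nonneg_of_nonneg h1)
      (mul_nonneg (Real.Gamma_nonneg_of_nonneg hμ.le) (pow_pos hlam k).le)
  have hmono_g : ∀ k : ℕ, Measurable fun x : ℝ => x ^ k := fun k =>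
    measurable_id.pow_const k
  have hFmeas : Measurable (fun x : ℝ => mittagLeffler ρ (x * T ^ ρ)) := by
    rw [show (fun x : ℝ => mittagLeffler ρ (x * T ^ ρ))
        = fun x => ∑' k, c k * x ^ k from funext hFeq]
    apply measurable_of_tendsto_metrizable
      (f := fun N x => ∑ k ∈ Finset.range N, c k * x ^ k)
    · exact fun N => Finset.measurable_sum _ fun k _ => measurable_const.mul (hmono_g k)
    · rw [tendsto_pi_nhds]
      exact fun x => (hsum_cx x).hasSum.tendsto_sum_nat
  have haepos := ULLN.gammaLaw_ae_pos μ lam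
  have hmom_int : ∀ k : ℕ, Integrable (fun x => c k * x ^ k) (gammaLaw μ lam) :=
    fun k => (ULLN.gammaLaw_moment_integrable hμ hlam k).const_mul (c k)
  have hmom_val : ∀ k : ℕ, ∫ x, c k * x ^ k ∂(gammaLaw μ lam) = c k * Mo k := by
    intro k
    rw [MeasureTheory.integral_const_mul, ULLN.gammaLaw_moment hμ hlam k, hModef]
  have habs_val : ∀ k : ℕ, ∫ x, ‖c k * x ^ k‖ ∂(gammaLaw μ lam) = c k * Mo k := by
    intro k
    rw [← hmom_val k]
    apply integral_congr_ae
    filter_upwards [haepos] with x hx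
    rw [Real.norm_eq_abs, abs_of_nonneg (mul_nonneg (hc0 k) (pow_nonneg (le_of_lt hx) k))]
  have hFintegral : ∫ x, mittagLeffler ρ (x * T ^ ρ) ∂(gammaLaw μ lam)
      = ∑' k, c k * Mo k := by
    rw [show (fun x : ℝ => mittagLeffler ρ (x * T ^ ρ))
        = fun x => ∑' k, c k * x ^ k from funext hFeq]
    rw [← integral_tsum_of_summable_integral_norm hmom_int
      (by refine (hsum_cM.congr fun k => ?_); rw [habs_val k])]
    exact tsum_congr fun k => hmom_val k
  have hFint : Integrable (fun x : ℝ => mittagLeffler ρ (x * T ^ ρ)) (gammaLaw μ lam) := by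
    refine ⟨hFmeas.aestronglyMeasurable, ?_⟩
    rw [hasFiniteIntegral_iff_norm]
    calc ∫⁻ x, ENNReal.ofReal ‖mittagLeffler ρ (x * T ^ ρ)‖ ∂(gammaLaw μ lam)
        ≤ ∫⁻ x, ∑' k, ENNReal.ofReal (c k * x ^ k) ∂(gammaLaw μ lam) := by
          apply lintegral_mono_ae
          filter_upwards [haepos] with x hx
          have hsabs : Summable (fun k => c k * x ^ k) := hsum_cx x
          have hnn : ∀ k : ℕ, 0 ≤ c k * x ^ k := fun k =>
            mul_nonneg (hc0 k) (pow_nonneg (le_of_lt hx) k)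
          have h1 : ‖mittagLeffler ρ (x * T ^ ρ)‖ ≤ ∑' k, c k * x ^ k := by
            rw [hFeq x]
            calc ‖∑' k, c k * x ^ k‖ ≤ ∑' k, ‖c k * x ^ k‖ :=
                norm_tsum_le_tsum_norm (by
                  refine hsabs.congr fun k => ?_
                  rw [Real.norm_eq_abs, abs_of_nonneg (hnn k)])
              _ = ∑' k, c k * x ^ k := tsum_congr fun k => by
                  rw [Real.norm_eq_abs, abs_of_nonneg (hnn k)]
          calc ENNReal.ofReal ‖mittagLeffler ρ (x * T ^ ρ)‖
              ≤ ENNReal.ofReal (∑' k, c k * x ^ k) := ENNReal.ofReal_le_ofReal h1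
            _ = ∑' k, ENNReal.ofReal (c k * x ^ k) :=
                ENNReal.ofReal_tsum_of_nonneg hnn hsabs
      _ = ∑' k, ∫⁻ x, ENNReal.ofReal (c k * x ^ k) ∂(gammaLaw μ lam) :=
          lintegral_tsum fun k =>
            ((measurable_const.mul (hmono_g k)).ennreal_ofReal).aemeasurable
      _ = ∑' k, ENNReal.ofReal (c k * Mo k) := by
          refine tsum_congr fun k => ?_
          rw [← ofReal_integral_eq_lintegral_ofReal (hmom_int k)
            (by filter_upwards [haepos] with x hx
                exact mul_nonneg (hc0 k) (pow_nonneg (le_of_lt hx) k)),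
            hmom_val k]
      _ = ENNReal.ofReal (∑' k, c k * Mo k) :=
          (ENNReal.ofReal_tsum_of_nonneg
            (fun k => mul_nonneg (hc0 k) (hMo0 k)) hsum_cM).symm
      _ < ⊤ := ENNReal.ofReal_lt_top
  refine ⟨hFmeas, hFint, ?_⟩
  rw [hFintegral]
  exact tsum_congr fun k => by simp only [hcdef, hModef]

set_option maxHeartbeats 4000000 in
open Filter Finset Real in
private lemma ULLN.deterministic {ρ μ lam T : ℝ}
    (hρ₁ : 1 < ρ) (hμ : 0 < μ) (hlam : 0 < lam) (hT : 0 < T)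
    (a : ℕ → ℝ) (hpos : ∀ j, 0 < a j)
    (h1 : ∀ k : ℕ, Tendsto (fun n : ℕ => (∑ j ∈ Finset.range n, a j ^ k) / (n:ℝ))
      atTop (nhds (Real.Gamma (μ + (k:ℝ)) / (Real.Gamma μ * lam ^ k))))
    (h2 : Tendsto
      (fun n : ℕ => (∑ j ∈ Finset.range n, mittagLeffler ρ (a j * T ^ ρ)) / (n:ℝ))
      atTop
      (nhds (∑' k : ℕ, (T ^ ρ) ^ k / Real.Gamma (ρ * (k:ℝ) + 1)
        * (Real.Gamma (μ + (k:ℝ)) / (Real.Gamma μ * lam ^ k))))) :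
    TendstoUniformlyOn
      (fun (n : ℕ) (t : ℝ) =>
        (1 / (n : ℝ)) * ∑ k ∈ Finset.range n, mittagLeffler ρ (-(a k * t ^ ρ)))
      (fun t => genML ρ μ (-(t ^ ρ / lam)))
      Filter.atTop (Set.Icc 0 T) := by
  have hρ0 : (0:ℝ) < ρ := by linarith
  have hTρ : (0:ℝ) < T ^ ρ := Real.rpow_pos_of_pos hT ρ
  have hΓμ : (0:ℝ) < Real.Gamma μ := Real.Gamma_pos_of_pos hμ
  obtain ⟨hΓρ, hsum_cM, hsum_cx, hFeq⟩ := ULLN.prelude hρ₁ hμ hlam hT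
  obtain ⟨c, hcdef⟩ : ∃ c : ℕ → ℝ,
      c = fun k : ℕ => (T ^ ρ) ^ k / Real.Gamma (ρ * (k:ℝ) + 1) := ⟨_, rfl⟩
  obtain ⟨Mo, hModef⟩ : ∃ Mo : ℕ → ℝ,
      Mo = fun k : ℕ => Real.Gamma (μ + (k:ℝ)) / (Real.Gamma μ * lam ^ k) := ⟨_, rfl⟩
  have hsum_cM : Summable (fun k : ℕ => c k * Mo k) := by
    refine hsum_cM.congr fun k => ?_
    simp only [hcdef, hModef]
  have hsum_cx : ∀ x : ℝ, Summable (fun k : ℕ => c k * x ^ k) := by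
    intro x
    refine (hsum_cx x).congr fun k => ?_
    simp only [hcdef]
  have hFeq : ∀ x : ℝ, mittagLeffler ρ (x * T ^ ρ) = ∑' k, c k * x ^ k := by
    intro x
    rw [hFeq x]
    exact tsum_congr fun k => by simp only [hcdef]
  have h1 : ∀ k : ℕ, Tendsto (fun n : ℕ => (∑ j ∈ Finset.range n, a j ^ k) / (n:ℝ))
      atTop (nhds (Mo k)) := by
    intro k
    rw [hModef]
    exact h1 k
  have h2' : Tendsto
      (fun n : ℕ => (∑ j ∈ Finset.range n, mittagLeffler ρ (a j * T ^ ρ)) / (n:ℝ))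
      atTop (nhds (∑' k : ℕ, c k * Mo k)) := by
    rw [show (∑' k : ℕ, c k * Mo k) = ∑' k : ℕ, (T ^ ρ) ^ k / Real.Gamma (ρ * (k:ℝ) + 1)
      * (Real.Gamma (μ + (k:ℝ)) / (Real.Gamma μ * lam ^ k)) from
      tsum_congr fun k => by simp only [hcdef, hModef]]
    exact h2
  clear h2
  have hc0 : ∀ k, 0 ≤ c k := by
    intro k; rw [hcdef]
    exact div_nonneg (by positivity) (hΓρ k).le
  have hMo0 : ∀ k, 0 ≤ Mo k := by
    intro k; rw [hModef]
    have hh : (0:ℝ) ≤ μ + k := by positivity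
    exact div_nonneg (Real.Gamma_nonneg_of_nonneg hh)
      (mul_nonneg (Real.Gamma_nonneg_of_nonneg hμ.le) (pow_pos hlam k).le)
  obtain ⟨S, hS⟩ : ∃ S : ℝ, S = ∑' k, c k * Mo k := ⟨_, rfl⟩
  rw [← hS] at h2'
  obtain ⟨m, hm⟩ : ∃ m : ℕ → ℕ → ℝ,
      m = fun n k => (∑ j ∈ Finset.range n, a j ^ k) / (n:ℝ) := ⟨_, rfl⟩
  have h1' : ∀ k, Tendsto (fun n => m n k) atTop (nhds (Mo k)) := by
    intro k
    rw [hm]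
    exact h1 k
  have hm0 : ∀ n k, 0 ≤ m n k := by
    intro n k
    rw [hm]
    exact div_nonneg (Finset.sum_nonneg fun j _ => pow_nonneg (hpos j).le k)
      (Nat.cast_nonneg n)
  have hsum_cm : ∀ n, Summable (fun k => c k * m n k) := by
    intro n
    have hs : Summable (fun k => (∑ j ∈ Finset.range n, c k * a j ^ k) / (n:ℝ)) :=
      Summable.div_const (summable_sum fun j _ => hsum_cx (a j)) _
    refine hs.congr fun k => ?_
    rw [hm, ← Finset.mul_sum]
    simp only
    ring
  have hSn : ∀ n, (∑ j ∈ Finset.range n, mittagLeffler ρ (a j * T ^ ρ)) / (n:ℝ)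
      = ∑' k, c k * m n k := by
    intro n
    have step1 : (∑ j ∈ Finset.range n, mittagLeffler ρ (a j * T ^ ρ))
        = ∑' k, ∑ j ∈ Finset.range n, c k * a j ^ k := by
      simp_rw [hFeq]
      exact (Summable.tsum_finsetSum fun j _ => hsum_cx (a j)).symm
    rw [step1, ← tsum_div_const]
    refine tsum_congr fun k => ?_
    rw [hm, ← Finset.mul_sum]
    simp only
    ring
  have h2'' : Tendsto (fun n => ∑' k, c k * m n k) atTop (nhds S) :=
    h2'.congr fun n => hSn n
  rw [Metric.tendstoUniformlyOn_iff]
  intro ε hε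
  have htail_eq : ∀ K : ℕ,
      ∑' i, c (i + K) * Mo (i + K) = S - ∑ k ∈ Finset.range K, c k * Mo k := by
    intro K
    have h := Summable.sum_add_tsum_nat_add (f := fun k => c k * Mo k) K hsum_cM
    rw [hS]
    linarith
  have hpart : Tendsto (fun K => ∑ k ∈ Finset.range K, c k * Mo k) atTop (nhds S) := by
    rw [hS]; exact hsum_cM.hasSum.tendsto_sum_nat
  have htail0 : Tendsto (fun K => ∑' i, c (i + K) * Mo (i + K)) atTop (nhds 0) := by
    have h := tendsto_const_nhds (x := S) (f := atTop (α := ℕ)) |>.sub hpart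
    rw [sub_self] at h
    exact h.congr fun K => (htail_eq K).symm
  obtain ⟨K, hK⟩ : ∃ K : ℕ, ∑' i, c (i + K) * Mo (i + K) < ε / 4 :=
    (htail0.eventually_lt_const (by positivity)).exists
  have evA : ∀ᶠ n in atTop,
      ∑ k ∈ Finset.range K, c k * |m n k - Mo k| < ε / 4 := by
    have hzero : Tendsto (fun n => ∑ k ∈ Finset.range K, c k * |m n k - Mo k|)
        atTop (nhds 0) := by
      have hterm : ∀ k ∈ Finset.range K,
          Tendsto (fun n => c k * |m n k - Mo k|) atTop (nhds 0) := by
        intro k _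
        have habs : Tendsto (fun n => |m n k - Mo k|) atTop (nhds 0) := by
          have h := (h1' k).sub_const (Mo k)
          rw [sub_self] at h
          have h' := h.abs
          rwa [abs_zero] at h'
        have h'' := habs.const_mul (c k)
        rwa [mul_zero] at h''
      have h := tendsto_finset_sum (Finset.range K) hterm
      rwa [Finset.sum_const_zero] at h
    exact hzero.eventually_lt_const (by positivity)
  have evB : ∀ᶠ n in atTop, ∑' i, c (i + K) * m n (i + K) < ε / 2 := by
    have hEqn : ∀ n, (∑' k, c k * m n k) - ∑ k ∈ Finset.range K, c k * m n k
        = ∑' i, c (i + K) * m n (i + K) := by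
      intro n
      have h := Summable.sum_add_tsum_nat_add (f := fun k => c k * m n k) K (hsum_cm n)
      linarith
    have hTend2 : Tendsto
        (fun n => (∑' k, c k * m n k) - ∑ k ∈ Finset.range K, c k * m n k) atTop
        (nhds (S - ∑ k ∈ Finset.range K, c k * Mo k)) :=
      h2''.sub (tendsto_finset_sum _ fun k _ => (h1' k).const_mul (c k))
    have hTend : Tendsto (fun n => ∑' i, c (i + K) * m n (i + K)) atTop
        (nhds (S - ∑ k ∈ Finset.range K, c k * Mo k)) :=
      hTend2.congr fun n => hEqn n
    apply hTend.eventually_lt_const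
    rw [← htail_eq K]
    linarith
  filter_upwards [evA, evB] with n hA hB
  intro t ht
  have ht0 : 0 ≤ t := ht.1
  have htρ : 0 ≤ t ^ ρ := Real.rpow_nonneg ht0 ρ
  have htT : t ^ ρ ≤ T ^ ρ := Real.rpow_le_rpow ht0 ht.2 hρ0.le
  obtain ⟨d, hd⟩ : ∃ d : ℕ → ℝ,
      d = fun k : ℕ => (-(t ^ ρ)) ^ k / Real.Gamma (ρ * (k:ℝ) + 1) := ⟨_, rfl⟩
  have hdabs : ∀ k, |d k| = (t ^ ρ) ^ k / Real.Gamma (ρ * (k:ℝ) + 1) := by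
    intro k
    rw [hd]
    simp only
    rw [abs_div, abs_pow, abs_neg, abs_of_nonneg htρ, abs_of_pos (hΓρ k)]
  have hdle : ∀ k, |d k| ≤ c k := by
    intro k
    rw [hdabs k, hcdef]
    simp only
    gcongr
  have hMLj : ∀ j : ℕ, mittagLeffler ρ (-(a j * t ^ ρ)) = ∑' k, d k * a j ^ k := by
    intro j
    simp only [mittagLeffler]
    refine tsum_congr fun k => ?_
    rw [hd, show -(a j * t ^ ρ) = (-(t ^ ρ)) * a j by ring, mul_pow]
    simp only
    ring
  have hsum_da : ∀ j : ℕ, Summable fun k => d k * a j ^ k := by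
    intro j
    refine (ULLN.summable_ML hρ₁ (-(a j * t ^ ρ))).congr fun k => ?_
    rw [hd, show -(a j * t ^ ρ) = (-(t ^ ρ)) * a j by ring, mul_pow]
    simp only
    ring
  have hfn : (1 / (n:ℝ)) * ∑ j ∈ Finset.range n, mittagLeffler ρ (-(a j * t ^ ρ))
      = ∑' k, d k * m n k := by
    simp_rw [hMLj]
    rw [← Summable.tsum_finsetSum (fun j _ => hsum_da j), ← tsum_mul_left]
    refine tsum_congr fun k => ?_
    rw [hm, ← Finset.mul_sum]
    simp only
    ring
  have hgt : genML ρ μ (-(t ^ ρ / lam)) = ∑' k, d k * Mo k := by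
    simp only [genML]
    refine tsum_congr fun k => ?_
    rw [hd, hModef, show -(t ^ ρ / lam) = (-(t ^ ρ)) / lam by ring, div_pow]
    simp only
    have hlk : (lam:ℝ) ^ k ≠ 0 := (pow_pos hlam k).ne'
    field_simp
  have hsum_dm : Summable fun k => d k * m n k := by
    apply Summable.of_norm_bounded (hsum_cm n)
    intro k
    rw [Real.norm_eq_abs, abs_mul, abs_of_nonneg (hm0 n k)]
    exact mul_le_mul_of_nonneg_right (hdle k) (hm0 n k)
  have hsum_dM : Summable fun k => d k * Mo k := by
    apply Summable.of_norm_bounded hsum_cM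
    intro k
    rw [Real.norm_eq_abs, abs_mul, abs_of_nonneg (hMo0 k)]
    exact mul_le_mul_of_nonneg_right (hdle k) (hMo0 k)
  have hsum_abs : Summable fun k => c k * |m n k - Mo k| := by
    apply Summable.of_nonneg_of_le (fun k => mul_nonneg (hc0 k) (abs_nonneg _))
      (fun k => ?_) ((hsum_cm n).add hsum_cM)
    have habs : |m n k - Mo k| ≤ m n k + Mo k := by
      rw [abs_sub_le_iff]
      constructor <;> linarith [hm0 n k, hMo0 k]
    calc c k * |m n k - Mo k| ≤ c k * (m n k + Mo k) :=
          mul_le_mul_of_nonneg_left habs (hc0 k)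
      _ = c k * m n k + c k * Mo k := by ring
  have hdiff : (1 / (n:ℝ)) * ∑ j ∈ Finset.range n, mittagLeffler ρ (-(a j * t ^ ρ))
      - genML ρ μ (-(t ^ ρ / lam)) = ∑' k, d k * (m n k - Mo k) := by
    rw [hfn, hgt, ← Summable.tsum_sub hsum_dm hsum_dM]
    exact tsum_congr fun k => (mul_sub _ _ _).symm
  have hsum_norms : Summable fun k => ‖d k * (m n k - Mo k)‖ := by
    apply Summable.of_nonneg_of_le (fun k => norm_nonneg _) (fun k => ?_) hsum_abs
    rw [Real.norm_eq_abs, abs_mul]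
    exact mul_le_mul_of_nonneg_right (hdle k) (abs_nonneg _)
  have hs1 : Summable fun i => c (i + K) * m n (i + K) :=
    (summable_nat_add_iff (f := fun k => c k * m n k) K).2 (hsum_cm n)
  have hs2 : Summable fun i => c (i + K) * Mo (i + K) :=
    (summable_nat_add_iff (f := fun k => c k * Mo k) K).2 hsum_cM
  have hsK : Summable fun i => c (i + K) * |m n (i + K) - Mo (i + K)| :=
    (summable_nat_add_iff (f := fun k => c k * |m n k - Mo k|) K).2 hsum_abs
  rw [Real.dist_eq]
  calc |genML ρ μ (-(t ^ ρ / lam))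
        - (1 / (n:ℝ)) * ∑ j ∈ Finset.range n, mittagLeffler ρ (-(a j * t ^ ρ))|
      = |∑' k, d k * (m n k - Mo k)| := by rw [abs_sub_comm, hdiff]
    _ ≤ ∑' k, c k * |m n k - Mo k| := by
        calc |∑' k, d k * (m n k - Mo k)| ≤ ∑' k, ‖d k * (m n k - Mo k)‖ := by
              rw [← Real.norm_eq_abs]
              exact norm_tsum_le_tsum_norm hsum_norms
          _ ≤ ∑' k, c k * |m n k - Mo k| := by
              refine Summable.tsum_le_tsum (fun k => ?_) hsum_norms hsum_abs
              rw [Real.norm_eq_abs, abs_mul]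
              exact mul_le_mul_of_nonneg_right (hdle k) (abs_nonneg _)
    _ = (∑ k ∈ Finset.range K, c k * |m n k - Mo k|)
        + ∑' i, c (i + K) * |m n (i + K) - Mo (i + K)| :=
        (Summable.sum_add_tsum_nat_add K hsum_abs).symm
    _ ≤ (∑ k ∈ Finset.range K, c k * |m n k - Mo k|)
        + ((∑' i, c (i + K) * m n (i + K)) + ∑' i, c (i + K) * Mo (i + K)) := by
        have hle : ∑' i, c (i + K) * |m n (i + K) - Mo (i + K)|
            ≤ ∑' i, (c (i + K) * m n (i + K) + c (i + K) * Mo (i + K)) := by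
          refine Summable.tsum_le_tsum (fun i => ?_) hsK (hs1.add hs2)
          have habs : |m n (i + K) - Mo (i + K)| ≤ m n (i + K) + Mo (i + K) := by
            rw [abs_sub_le_iff]
            constructor <;> linarith [hm0 n (i + K), hMo0 (i + K)]
          calc c (i + K) * |m n (i + K) - Mo (i + K)|
              ≤ c (i + K) * (m n (i + K) + Mo (i + K)) :=
                mul_le_mul_of_nonneg_left habs (hc0 (i + K))
            _ = c (i + K) * m n (i + K) + c (i + K) * Mo (i + K) := by ring
        rw [Summable.tsum_add hs1 hs2] at hle
        linarith
    _ < ε / 4 + (ε / 2 + ε / 4) := by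
        apply add_lt_add hA
        exact add_lt_add hB hK
    _ = ε := by ring

set_option maxHeartbeats 1000000 in
open Filter Finset Real in
theorem uniform_LLN_mittagLeffler (ρ μ lam T : ℝ)
    (hρ₁ : 1 < ρ) (hρ₂ : ρ < 2) (hμ : 0 < μ) (hlam : 0 < lam) (hT : 0 < T)
    {Ω : Type*} [MeasurableSpace Ω] (P : Measure Ω) [IsProbabilityMeasure P]
    (α : ℕ → Ω → ℝ) (hmeas : ∀ k, Measurable (α k))
    (hindep : iIndepFun α P)
    (hdist : ∀ k, P.map (α k) = gammaLaw μ lam) :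
    ∀ᵐ ω ∂P, TendstoUniformlyOn
      (fun (n : ℕ) (t : ℝ) =>
        (1 / (n : ℝ)) * ∑ k ∈ Finset.range n, mittagLeffler ρ (-(α k ω * t ^ ρ)))
      (fun t => genML ρ μ (-(t ^ ρ / lam)))
      Filter.atTop (Set.Icc 0 T) := by
  obtain ⟨hFmeas, hFint, hFintegral⟩ := ULLN.F_props (μ := μ) (lam := lam) hρ₁ hμ hlam hT
  have haepos := ULLN.gammaLaw_ae_pos μ lam
  have ev1 : ∀ᵐ ω ∂P, ∀ k : ℕ,
      Tendsto (fun n => (∑ j ∈ Finset.range n, (α j ω) ^ k) / (n:ℝ)) atTop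
        (nhds (Real.Gamma (μ + (k:ℝ)) / (Real.Gamma μ * lam ^ k))) := by
    rw [ae_all_iff]
    intro k
    have h := ULLN.slln_comp P α hmeas hindep hdist (fun x : ℝ => x ^ k)
      (measurable_id.pow_const k) (ULLN.gammaLaw_moment_integrable hμ hlam k)
    simpa only [ULLN.gammaLaw_moment hμ hlam k] using h
  have ev2 : ∀ᵐ ω ∂P,
      Tendsto (fun n => (∑ j ∈ Finset.range n, mittagLeffler ρ (α j ω * T ^ ρ)) / (n:ℝ))
        atTop (nhds (∑' k : ℕ, (T ^ ρ) ^ k / Real.Gamma (ρ * (k:ℝ) + 1)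
          * (Real.Gamma (μ + (k:ℝ)) / (Real.Gamma μ * lam ^ k)))) := by
    have h := ULLN.slln_comp P α hmeas hindep hdist _ hFmeas hFint
    simpa only [hFintegral] using h
  have ev3 : ∀ᵐ ω ∂P, ∀ j, 0 < α j ω := by
    rw [ae_all_iff]
    intro j
    have h1 : ∀ᵐ x ∂(P.map (α j)), x ∈ Set.Ioi (0:ℝ) := by rw [hdist j]; exact haepos
    exact (MeasureTheory.ae_map_iff (hmeas j).aemeasurable measurableSet_Ioi).mp h1
  filter_upwards [ev1, ev2, ev3] with ω h1 h2 h3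
  exact ULLN.deterministic hρ₁ hμ hlam hT (fun j => α j ω) h3 h1 h2
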